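/- (Restriction Lemma.) Let N ≥ 3 and let R and S be charge-conserving width-2 rank-N matrices. For an injective map ψ : Fin 3 → Fin N and a width-2 rank-N matrix M, define the restricted width-2 rank-3 matrix f^ψ M by (f^ψ M) (i,j) (k,l) = M (ψ i, ψ j) (ψ k, ψ l). Then the pair (S,R) satisfies the loop braid relations (at rank N) if and only if for every injective ψ : Fin 3 → Fin N the pair (f^ψ S, f^ψ R) satisfies the loop braid relations (at rank 3). -/
import Mathlib


open Matrix

noncomputable section

/-- The width-3 matrix `M₁ = M ⊗ 1`. -/
def Lone {N : ℕ} (M : Matrix (Fin N × Fin N) (Fin N × Fin N) ℂ) :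
    Matrix (Fin N × Fin N × Fin N) (Fin N × Fin N × Fin N) ℂ :=
  Matrix.of fun p q =>
    M (p.1, p.2.1) (q.1, q.2.1) * (if p.2.2 = q.2.2 then (1 : ℂ) else 0)

/-- The width-3 matrix `M₂ = 1 ⊗ M`. -/
def Ltwo {N : ℕ} (M : Matrix (Fin N × Fin N) (Fin N × Fin N) ℂ) :
    Matrix (Fin N × Fin N × Fin N) (Fin N × Fin N × Fin N) ℂ :=
  Matrix.of fun p q =>
    (if p.1 = q.1 then (1 : ℂ) else 0) * M (p.2.1, p.2.2) (q.2.1, q.2.2)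

/-- The pair (S,R) satisfies the loop braid relations. -/
def LoopBraid {N : ℕ} (S R : Matrix (Fin N × Fin N) (Fin N × Fin N) ℂ) : Prop :=
  S * S = 1 ∧
  Lone S * Ltwo S * Lone S = Ltwo S * Lone S * Ltwo S ∧
  Lone R * Ltwo R * Lone R = Ltwo R * Lone R * Ltwo R ∧
  Lone R * Ltwo R * Lone S = Ltwo S * Lone R * Ltwo R ∧
  Lone R * Ltwo S * Lone S = Ltwo S * Lone S * Ltwo R

/-- A width-2 rank-N matrix is charge-conserving. -/
def ChargeConserving {N : ℕ} (M : Matrix (Fin N × Fin N) (Fin N × Fin N) ℂ) : Prop :=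
  ∀ k l i j : Fin N, M (k, l) (i, j) ≠ 0 → ((k, l) = (i, j) ∨ (k, l) = (j, i))

/-- Restriction of a width-2 rank-N matrix along an injective map `ψ : Fin 3 → Fin N`. -/
def restrict3 {N : ℕ} (ψ : Fin 3 → Fin N)
    (M : Matrix (Fin N × Fin N) (Fin N × Fin N) ℂ) :
    Matrix (Fin 3 × Fin 3) (Fin 3 × Fin 3) ℂ :=
  Matrix.of fun p q => M (ψ p.1, ψ p.2) (ψ q.1, ψ q.2)

/-! ### Auxiliary definitions -/

abbrev M2mat (N : ℕ) := Matrix (Fin N × Fin N) (Fin N × Fin N) ℂ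
abbrev M3mat (N : ℕ) := Matrix (Fin N × Fin N × Fin N) (Fin N × Fin N × Fin N) ℂ

/-- Restriction of a width-3 matrix. -/
def restrict27 {N : ℕ} (ψ : Fin 3 → Fin N) (T : M3mat N) : M3mat 3 :=
  Matrix.of fun p q =>
    T (ψ p.1, ψ p.2.1, ψ p.2.2) (ψ q.1, ψ q.2.1, ψ q.2.2)

/-- Entries only connect indices whose letters are among the row letters (width 2). -/
abbrev Sub2 {N : ℕ} (M : M2mat N) : Prop :=
  ∀ p q, M p q ≠ 0 → (q.1 = p.1 ∨ q.1 = p.2) ∧ (q.2 = p.1 ∨ q.2 = p.2)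

abbrev mem3 {N : ℕ} (x : Fin N) (p : Fin N × Fin N × Fin N) : Prop :=
  x = p.1 ∨ x = p.2.1 ∨ x = p.2.2

/-- Entries only connect indices whose letters are among the row letters (width 3). -/
abbrev Sub3 {N : ℕ} (T : M3mat N) : Prop :=
  ∀ p q, T p q ≠ 0 → mem3 q.1 p ∧ mem3 q.2.1 p ∧ mem3 q.2.2 p

variable {N : ℕ}

lemma sub2_of_cc {M : M2mat N} (h : ChargeConserving M) : Sub2 M := by
  intro p q hne
  rcases h p.1 p.2 q.1 q.2 hne with h' | h' <;> rw [Prod.ext_iff] at h'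
  · exact ⟨Or.inl h'.1.symm, Or.inr h'.2.symm⟩
  · exact ⟨Or.inr h'.2.symm, Or.inl h'.1.symm⟩

lemma sub2_mul {A B : M2mat N} (hA : Sub2 A) (hB : Sub2 B) : Sub2 (A * B) := by
  intro p q hne
  rw [Matrix.mul_apply] at hne
  obtain ⟨r, -, hr⟩ := Finset.exists_ne_zero_of_sum_ne_zero hne
  have h1 := hA p r (left_ne_zero_of_mul hr)
  have h2 := hB r q (right_ne_zero_of_mul hr)
  constructor
  · rcases h2.1 with h | h
    · rw [h]; exact h1.1
    · rw [h]; exact h1.2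
  · rcases h2.2 with h | h
    · rw [h]; exact h1.1
    · rw [h]; exact h1.2

lemma mem3_trans {x : Fin N} {r p : Fin N × Fin N × Fin N} (hx : mem3 x r)
    (h : mem3 r.1 p ∧ mem3 r.2.1 p ∧ mem3 r.2.2 p) : mem3 x p := by
  rcases hx with h' | h' | h' <;> rw [h']
  · exact h.1
  · exact h.2.1
  · exact h.2.2

lemma sub3_mul {A B : M3mat N} (hA : Sub3 A) (hB : Sub3 B) : Sub3 (A * B) := by
  intro p q hne
  rw [Matrix.mul_apply] at hne
  obtain ⟨r, -, hr⟩ := Finset.exists_ne_zero_of_sum_ne_zero hne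
  have h1 := hA p r (left_ne_zero_of_mul hr)
  have h2 := hB r q (right_ne_zero_of_mul hr)
  exact ⟨mem3_trans h2.1 h1, mem3_trans h2.2.1 h1, mem3_trans h2.2.2 h1⟩

lemma sub3_lone {M : M2mat N} (h : Sub2 M) : Sub3 (Lone M) := by
  intro p q hne
  simp only [Lone, Matrix.of_apply] at hne
  have hM := h (p.1, p.2.1) (q.1, q.2.1) (left_ne_zero_of_mul hne)
  have hc : p.2.2 = q.2.2 := by
    by_contra hc
    rw [if_neg hc, mul_zero] at hne
    exact hne rfl
  refine ⟨?_, ?_, Or.inr (Or.inr hc.symm)⟩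
  · rcases hM.1 with h' | h'
    · exact Or.inl h'
    · exact Or.inr (Or.inl h')
  · rcases hM.2 with h' | h'
    · exact Or.inl h'
    · exact Or.inr (Or.inl h')

lemma sub3_ltwo {M : M2mat N} (h : Sub2 M) : Sub3 (Ltwo M) := by
  intro p q hne
  simp only [Ltwo, Matrix.of_apply] at hne
  have hM := h (p.2.1, p.2.2) (q.2.1, q.2.2) (right_ne_zero_of_mul hne)
  have hc : p.1 = q.1 := by
    by_contra hc
    rw [if_neg hc, zero_mul] at hne
    exact hne rfl
  refine ⟨Or.inl hc.symm, ?_, ?_⟩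
  · rcases hM.1 with h' | h'
    · exact Or.inr (Or.inl h')
    · exact Or.inr (Or.inr h')
  · rcases hM.2 with h' | h'
    · exact Or.inr (Or.inl h')
    · exact Or.inr (Or.inr h')

lemma psi2_inj {ψ : Fin 3 → Fin N} (hψ : Function.Injective ψ) :
    Function.Injective (fun p : Fin 3 × Fin 3 => ((ψ p.1, ψ p.2) : Fin N × Fin N)) := by
  intro a b hab
  rw [Prod.ext_iff] at hab ⊢
  exact ⟨hψ hab.1, hψ hab.2⟩

lemma psi3_inj {ψ : Fin 3 → Fin N} (hψ : Function.Injective ψ) :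
    Function.Injective
      (fun p : Fin 3 × Fin 3 × Fin 3 => ((ψ p.1, ψ p.2.1, ψ p.2.2) : Fin N × Fin N × Fin N)) := by
  intro a b hab
  rw [Prod.ext_iff, Prod.ext_iff] at hab
  rw [Prod.ext_iff, Prod.ext_iff]
  exact ⟨hψ hab.1, hψ hab.2.1, hψ hab.2.2⟩

lemma sum_range_eq {α β : Type*} [Fintype α] [Fintype β] [DecidableEq β]
    (g : α → β) (hg : Function.Injective g) (f : β → ℂ)
    (hf : ∀ b, (¬ ∃ a, g a = b) → f b = 0) :
    ∑ b, f b = ∑ a, f (g a) := by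
  rw [← Finset.sum_image (g := g) (s := Finset.univ) (f := f)
      (fun x _ y _ h => hg h)]
  apply (Finset.sum_subset (Finset.subset_univ _) ?_).symm
  intro b _ hb
  apply hf
  rintro ⟨a, rfl⟩
  exact hb (Finset.mem_image.2 ⟨a, Finset.mem_univ _, rfl⟩)

lemma restrict_mul2 {ψ : Fin 3 → Fin N} (hψ : Function.Injective ψ)
    {A B : M2mat N} (hA : Sub2 A) :
    restrict3 ψ (A * B) = restrict3 ψ A * restrict3 ψ B := by
  ext p q
  simp only [restrict3, Matrix.of_apply, Matrix.mul_apply]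
  refine sum_range_eq (fun r : Fin 3 × Fin 3 => ((ψ r.1, ψ r.2) : Fin N × Fin N))
    (psi2_inj hψ) (fun r => A (ψ p.1, ψ p.2) r * B r (ψ q.1, ψ q.2)) ?_
  intro r hr
  by_contra hne
  apply hr
  have h1 := hA (ψ p.1, ψ p.2) r (left_ne_zero_of_mul hne)
  have e1 : ∃ i, ψ i = r.1 := by
    rcases h1.1 with h | h
    exacts [⟨p.1, h.symm⟩, ⟨p.2, h.symm⟩]
  have e2 : ∃ i, ψ i = r.2 := by
    rcases h1.2 with h | h
    exacts [⟨p.1, h.symm⟩, ⟨p.2, h.symm⟩]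
  obtain ⟨i, hi⟩ := e1
  obtain ⟨j, hj⟩ := e2
  exact ⟨(i, j), by rw [Prod.ext_iff]; exact ⟨hi, hj⟩⟩

lemma restrict_mul3 {ψ : Fin 3 → Fin N} (hψ : Function.Injective ψ)
    {A B : M3mat N} (hA : Sub3 A) :
    restrict27 ψ (A * B) = restrict27 ψ A * restrict27 ψ B := by
  ext p q
  simp only [restrict27, Matrix.of_apply, Matrix.mul_apply]
  refine sum_range_eq
    (fun r : Fin 3 × Fin 3 × Fin 3 => ((ψ r.1, ψ r.2.1, ψ r.2.2) : Fin N × Fin N × Fin N))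
    (psi3_inj hψ)
    (fun r => A (ψ p.1, ψ p.2.1, ψ p.2.2) r * B r (ψ q.1, ψ q.2.1, ψ q.2.2)) ?_
  intro r hr
  by_contra hne
  apply hr
  have h1 := hA (ψ p.1, ψ p.2.1, ψ p.2.2) r (left_ne_zero_of_mul hne)
  have e1 : ∃ i, ψ i = r.1 := by
    rcases h1.1 with h | h | h
    exacts [⟨p.1, h.symm⟩, ⟨p.2.1, h.symm⟩, ⟨p.2.2, h.symm⟩]
  have e2 : ∃ i, ψ i = r.2.1 := by
    rcases h1.2.1 with h | h | h
    exacts [⟨p.1, h.symm⟩, ⟨p.2.1, h.symm⟩, ⟨p.2.2, h.symm⟩]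
  have e3 : ∃ i, ψ i = r.2.2 := by
    rcases h1.2.2 with h | h | h
    exacts [⟨p.1, h.symm⟩, ⟨p.2.1, h.symm⟩, ⟨p.2.2, h.symm⟩]
  obtain ⟨i, hi⟩ := e1
  obtain ⟨j, hj⟩ := e2
  obtain ⟨k, hk⟩ := e3
  exact ⟨(i, j, k), by rw [Prod.ext_iff, Prod.ext_iff]; exact ⟨hi, hj, hk⟩⟩

lemma restrict_triple {ψ : Fin 3 → Fin N} (hψ : Function.Injective ψ)
    {A B C : M3mat N} (hA : Sub3 A) (hB : Sub3 B) :
    restrict27 ψ (A * B * C) = restrict27 ψ A * restrict27 ψ B * restrict27 ψ C := by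
  rw [restrict_mul3 hψ (sub3_mul hA hB), restrict_mul3 hψ hA]

lemma lone_restrict {ψ : Fin 3 → Fin N} (hψ : Function.Injective ψ) (M : M2mat N) :
    Lone (restrict3 ψ M) = restrict27 ψ (Lone M) := by
  ext p q
  simp only [Lone, restrict3, restrict27, Matrix.of_apply, hψ.eq_iff]

lemma ltwo_restrict {ψ : Fin 3 → Fin N} (hψ : Function.Injective ψ) (M : M2mat N) :
    Ltwo (restrict3 ψ M) = restrict27 ψ (Ltwo M) := by
  ext p q
  simp only [Ltwo, restrict3, restrict27, Matrix.of_apply, hψ.eq_iff]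

lemma restrict_one {ψ : Fin 3 → Fin N} (hψ : Function.Injective ψ) :
    restrict3 ψ (1 : M2mat N) = 1 := by
  ext p q
  simp only [restrict3, Matrix.of_apply, Matrix.one_apply, Prod.ext_iff, hψ.eq_iff]

lemma exists_inj (hN : 3 ≤ N) (a b c : Fin N) :
    ∃ ψ : Fin 3 → Fin N, Function.Injective ψ ∧
      a ∈ Set.range ψ ∧ b ∈ Set.range ψ ∧ c ∈ Set.range ψ := by
  have hcard : ({a, b, c} : Finset (Fin N)).card ≤ 3 := by
    apply le_trans (Finset.card_insert_le _ _)
    apply Nat.succ_le_succ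
    apply le_trans (Finset.card_insert_le _ _)
    simp
  obtain ⟨t, hst, htc⟩ := Finset.exists_superset_card_eq hcard (by simpa using hN)
  let e := t.equivFinOfCardEq htc
  have hmem : ∀ x ∈ t, x ∈ Set.range (fun i => ((e.symm i : t) : Fin N)) := by
    intro x hx
    exact ⟨e ⟨x, hx⟩, by simp⟩
  refine ⟨fun i => ((e.symm i : t) : Fin N), ?_, ?_, ?_, ?_⟩
  · intro x y hxy
    exact e.symm.injective (Subtype.ext hxy)
  · exact hmem a (hst (by simp))
  · exact hmem b (hst (by simp))
  · exact hmem c (hst (by simp))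

lemma eq_of_forall_restrict3 (hN : 3 ≤ N) {A B : M3mat N} (hA : Sub3 A) (hB : Sub3 B)
    (h : ∀ ψ : Fin 3 → Fin N, Function.Injective ψ → restrict27 ψ A = restrict27 ψ B) :
    A = B := by
  ext p q
  obtain ⟨ψ, hψ, ⟨a, ha⟩, ⟨b, hb⟩, ⟨c, hc⟩⟩ := exists_inj hN p.1 p.2.1 p.2.2
  have hp : ((ψ a, ψ b, ψ c) : Fin N × Fin N × Fin N) = p := by rw [ha, hb, hc]
  by_cases hq : ∃ q₀ : Fin 3 × Fin 3 × Fin 3, ((ψ q₀.1, ψ q₀.2.1, ψ q₀.2.2) : _) = q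
  · obtain ⟨q₀, hq₀⟩ := hq
    have hent := congrFun (congrFun (h ψ hψ) (a, b, c)) q₀
    simp only [restrict27, Matrix.of_apply] at hent
    rwa [hp, hq₀] at hent
  · have hz : ∀ T : M3mat N, Sub3 T → T p q = 0 := by
      intro T hT
      by_contra hne
      obtain ⟨h1, h2, h3⟩ := hT p q hne
      apply hq
      have e1 : ∃ i, ψ i = q.1 := by
        rcases h1 with h' | h' | h'
        exacts [⟨a, by rw [ha, h']⟩, ⟨b, by rw [hb, h']⟩, ⟨c, by rw [hc, h']⟩]
      have e2 : ∃ i, ψ i = q.2.1 := by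
        rcases h2 with h' | h' | h'
        exacts [⟨a, by rw [ha, h']⟩, ⟨b, by rw [hb, h']⟩, ⟨c, by rw [hc, h']⟩]
      have e3 : ∃ i, ψ i = q.2.2 := by
        rcases h3 with h' | h' | h'
        exacts [⟨a, by rw [ha, h']⟩, ⟨b, by rw [hb, h']⟩, ⟨c, by rw [hc, h']⟩]
      obtain ⟨i, hi⟩ := e1
      obtain ⟨j, hj⟩ := e2
      obtain ⟨k, hk⟩ := e3
      exact ⟨(i, j, k), by rw [Prod.ext_iff, Prod.ext_iff]; exact ⟨hi, hj, hk⟩⟩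
    rw [hz A hA, hz B hB]

lemma eq_one_of_forall_restrict (hN : 3 ≤ N) {A : M2mat N} (hA : Sub2 A)
    (h : ∀ ψ : Fin 3 → Fin N, Function.Injective ψ → restrict3 ψ A = 1) :
    A = 1 := by
  ext p q
  obtain ⟨ψ, hψ, ⟨a, ha⟩, ⟨b, hb⟩, -⟩ := exists_inj hN p.1 p.2 p.2
  have hp : ((ψ a, ψ b) : Fin N × Fin N) = p := by rw [ha, hb]
  by_cases hq : ∃ q₀ : Fin 3 × Fin 3, ((ψ q₀.1, ψ q₀.2) : Fin N × Fin N) = q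
  · obtain ⟨q₀, hq₀⟩ := hq
    have hent := congrFun (congrFun (h ψ hψ) (a, b)) q₀
    simp only [restrict3, Matrix.of_apply] at hent
    rw [hp, hq₀] at hent
    rw [hent, ← hp, ← hq₀]
    simp [Matrix.one_apply, Prod.ext_iff, hψ.eq_iff]
  · have hA0 : A p q = 0 := by
      by_contra hne
      obtain ⟨h1, h2⟩ := hA p q hne
      apply hq
      have e1 : ∃ i, ψ i = q.1 := by
        rcases h1 with h' | h'
        exacts [⟨a, by rw [ha, h']⟩, ⟨b, by rw [hb, h']⟩]
      have e2 : ∃ i, ψ i = q.2 := by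
        rcases h2 with h' | h'
        exacts [⟨a, by rw [ha, h']⟩, ⟨b, by rw [hb, h']⟩]
      obtain ⟨i, hi⟩ := e1
      obtain ⟨j, hj⟩ := e2
      exact ⟨(i, j), by rw [Prod.ext_iff]; exact ⟨hi, hj⟩⟩
    have hpq : p ≠ q := by
      intro hpq
      exact hq ⟨(a, b), by rw [hp, hpq]⟩
    rw [hA0, Matrix.one_apply_ne hpq]

theorem stmt10 (N : ℕ) (hN : 3 ≤ N)
    (R S : Matrix (Fin N × Fin N) (Fin N × Fin N) ℂ)
    (hccR : ChargeConserving R) (hccS : ChargeConserving S) :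
    LoopBraid S R ↔
      ∀ ψ : Fin 3 → Fin N, Function.Injective ψ →
        LoopBraid (restrict3 ψ S) (restrict3 ψ R) := by
  have hS2 : Sub2 S := sub2_of_cc hccS
  have hR2 : Sub2 R := sub2_of_cc hccR
  have h1S := sub3_lone hS2
  have h2S := sub3_ltwo hS2
  have h1R := sub3_lone hR2
  have h2R := sub3_ltwo hR2
  constructor
  · rintro ⟨h1, h2, h3, h4, h5⟩ ψ hψ
    refine ⟨?_, ?_, ?_, ?_, ?_⟩
    · rw [← restrict_mul2 hψ hS2, h1, restrict_one hψ]
    · rw [lone_restrict hψ S, ltwo_restrict hψ S,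
        ← restrict_triple hψ h1S h2S, ← restrict_triple hψ h2S h1S, h2]
    · rw [lone_restrict hψ R, ltwo_restrict hψ R,
        ← restrict_triple hψ h1R h2R, ← restrict_triple hψ h2R h1R, h3]
    · rw [lone_restrict hψ R, ltwo_restrict hψ R, lone_restrict hψ S, ltwo_restrict hψ S,
        ← restrict_triple hψ h1R h2R, ← restrict_triple hψ h2S h1R, h4]
    · rw [lone_restrict hψ R, ltwo_restrict hψ R, lone_restrict hψ S, ltwo_restrict hψ S,
        ← restrict_triple hψ h1R h2S, ← restrict_triple hψ h2S h1S, h5]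
  · intro h
    refine ⟨?_, ?_, ?_, ?_, ?_⟩
    · apply eq_one_of_forall_restrict hN (sub2_mul hS2 hS2)
      intro ψ hψ
      rw [restrict_mul2 hψ hS2]
      exact (h ψ hψ).1
    · apply eq_of_forall_restrict3 hN (sub3_mul (sub3_mul h1S h2S) h1S)
        (sub3_mul (sub3_mul h2S h1S) h2S)
      intro ψ hψ
      have := (h ψ hψ).2.1
      rwa [lone_restrict hψ S, ltwo_restrict hψ S,
        ← restrict_triple hψ h1S h2S, ← restrict_triple hψ h2S h1S] at this
    · apply eq_of_forall_restrict3 hN (sub3_mul (sub3_mul h1R h2R) h1R)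
        (sub3_mul (sub3_mul h2R h1R) h2R)
      intro ψ hψ
      have := (h ψ hψ).2.2.1
      rwa [lone_restrict hψ R, ltwo_restrict hψ R,
        ← restrict_triple hψ h1R h2R, ← restrict_triple hψ h2R h1R] at this
    · apply eq_of_forall_restrict3 hN (sub3_mul (sub3_mul h1R h2R) h1S)
        (sub3_mul (sub3_mul h2S h1R) h2R)
      intro ψ hψ
      have := (h ψ hψ).2.2.2.1
      rwa [lone_restrict hψ R, ltwo_restrict hψ R, lone_restrict hψ S, ltwo_restrict hψ S,
        ← restrict_triple hψ h1R h2R, ← restrict_triple hψ h2S h1R] at this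
    · apply eq_of_forall_restrict3 hN (sub3_mul (sub3_mul h1R h2S) h1S)
        (sub3_mul (sub3_mul h2S h1S) h2R)
      intro ψ hψ
      have := (h ψ hψ).2.2.2.2
      rwa [lone_restrict hψ R, ltwo_restrict hψ R, lone_restrict hψ S, ltwo_restrict hψ S,
        ← restrict_triple hψ h1R h2S, ← restrict_triple hψ h2S h1S] at this
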